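/- Let β be a complex number with |β| > 1 and A ⊂ ℤ[β] a finite alphabet with 0 ∈ A. If the set Fin_β(A) of numbers with finite (β,A)-representations contains 1 and is closed under addition, then β is algebraic over ℚ. -/

import Mathlib

noncomputable section

/-- `ℤ[β]`: the smallest subring of `ℂ` containing `β` (and hence `ℤ`). -/
def Zring (β : ℂ) : Subring ℂ := Subring.closure {β}

/-- `x` has a finite `(β, A)`-representation `x = ∑_{j=-m}^{n} a_j β^j` with digits in `A`. -/
def FinRep (β : ℂ) (A : Set ℂ) (x : ℂ) : Prop :=
  ∃ (m n : ℕ) (a : ℤ → ℂ), (∀ j, a j ∈ A) ∧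
    x = ∑ j ∈ Finset.Icc (-(m : ℤ)) (n : ℤ), a j * β ^ j

theorem stmt1 (β : ℂ) (hβ : 1 < ‖β‖) (A : Set ℂ) (hAfin : A.Finite)
    (h0 : (0 : ℂ) ∈ A) (hA : A ⊆ (Zring β : Set ℂ))
    (hone : FinRep β A 1)
    (hclosed : ∀ x y : ℂ, FinRep β A x → FinRep β A y → FinRep β A (x + y)) :
    IsAlgebraic ℚ β := by
  by_contra htr
  have hβ0 : β ≠ 0 := by
    intro h; rw [h] at hβ; simp at hβ; linarith
  -- injectivity of evaluation over ℤ
  have hinj : ∀ q : Polynomial ℤ, Polynomial.aeval β q = 0 → q = 0 := by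
    intro q hq
    by_contra hne
    exact htr ⟨q.map (algebraMap ℤ ℚ),
      (Polynomial.map_ne_zero_iff (algebraMap ℤ ℚ).injective_int).mpr hne,
      by rw [Polynomial.aeval_map_algebraMap]; exact hq⟩
  -- every element of A is an integer polynomial in β
  have hAex : ∀ a ∈ A, ∃ q : Polynomial ℤ, Polynomial.aeval β q = a := by
    intro a ha
    have h2 : Zring β ≤ (Polynomial.aeval β : Polynomial ℤ →ₐ[ℤ] ℂ).range.toSubring := by
      apply Subring.closure_le.mpr
      rintro x rfl
      exact ⟨Polynomial.X, by simp⟩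
    exact h2 (hA ha)
  classical
  set p : ℂ → Polynomial ℤ := fun a => if h : a ∈ A then (hAex a h).choose else 0 with hpdef
  have hp : ∀ a ∈ A, Polynomial.aeval β (p a) = a := by
    intro a ha
    simp only [hpdef, dif_pos ha]
    exact (hAex a ha).choose_spec
  set S := hAfin.toFinset with hS
  set D : ℕ := S.sup fun a => (p a).natDegree with hD
  set C : ℕ := S.sup fun a =>
    (Finset.range ((p a).natDegree + 1)).sup fun k => ((p a).coeff k).natAbs with hC
  have hdeg : ∀ a ∈ A, (p a).natDegree ≤ D := by
    intro a ha
    exact Finset.le_sup (f := fun a => (p a).natDegree) (hAfin.mem_toFinset.mpr ha)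
  have hcoeff : ∀ a ∈ A, ∀ k, ((p a).coeff k).natAbs ≤ C := by
    intro a ha k
    by_cases hk : k ≤ (p a).natDegree
    · calc ((p a).coeff k).natAbs
          ≤ (Finset.range ((p a).natDegree + 1)).sup fun k => ((p a).coeff k).natAbs :=
            Finset.le_sup (f := fun k => ((p a).coeff k).natAbs)
              (Finset.mem_range.mpr (Nat.lt_succ_of_le hk))
        _ ≤ C := Finset.le_sup
              (f := fun a => (Finset.range ((p a).natDegree + 1)).sup
                fun k => ((p a).coeff k).natAbs)
              (hAfin.mem_toFinset.mpr ha)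
    · rw [Polynomial.coeff_eq_zero_of_natDegree_lt (by omega)]; simp
  -- all naturals are representable
  have hrep : ∀ n : ℕ, FinRep β A (n : ℂ) := by
    intro n
    induction n with
    | zero =>
      exact ⟨0, 0, fun _ => 0, fun _ => h0, by simp⟩
    | succ n ih =>
      have := hclosed _ _ ih hone
      push_cast
      exact this
  set N : ℕ := (D + 1) * C + 1 with hN
  obtain ⟨m, k, a, haA, heq⟩ := hrep N
  set Q : Polynomial ℤ :=
    ∑ j ∈ Finset.Icc (-(m : ℤ)) (k : ℤ), p (a j) * Polynomial.X ^ (j + m).toNat with hQdef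
  have haQ : Polynomial.aeval β Q = (N : ℂ) * β ^ m := by
    rw [hQdef, map_sum]
    have : ∀ j ∈ Finset.Icc (-(m : ℤ)) (k : ℤ),
        Polynomial.aeval β (p (a j) * Polynomial.X ^ (j + m).toNat)
          = (a j * β ^ j) * β ^ m := by
      intro j hj
      rw [Finset.mem_Icc] at hj
      have hj0 : (0 : ℤ) ≤ j + m := by omega
      rw [map_mul, map_pow, Polynomial.aeval_X, hp _ (haA j)]
      have hpow : (β ^ (j + (m : ℤ)).toNat : ℂ) = β ^ j * β ^ m := by
        rw [← zpow_natCast β (j + m).toNat, Int.toNat_of_nonneg hj0, zpow_add₀ hβ0,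
          zpow_natCast]
      rw [hpow]; ring
    rw [Finset.sum_congr rfl this, ← Finset.sum_mul, ← heq]
  have hQ : Q = Polynomial.C (N : ℤ) * Polynomial.X ^ m := by
    have h0' : Polynomial.aeval β (Q - Polynomial.C (N : ℤ) * Polynomial.X ^ m) = 0 := by
      rw [map_sub, haQ, map_mul, map_pow, Polynomial.aeval_C, Polynomial.aeval_X]
      push_cast
      ring
    have := hinj _ h0'
    linear_combination (norm := ring_nf) this
  -- compare coefficients at degree m
  have hcm : (N : ℤ) = ∑ j ∈ Finset.Icc (-(m : ℤ)) (k : ℤ),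
      (p (a j) * Polynomial.X ^ (j + m).toNat).coeff m := by
    have := congrArg (fun q => Polynomial.coeff q m) hQ
    simp only [hQdef, Polynomial.finset_sum_coeff] at this
    rw [this, Polynomial.coeff_C_mul, Polynomial.coeff_X_pow, if_pos rfl, mul_one]
  have hbound : (N : ℤ) ≤ ((D : ℤ) + 1) * C := by
    calc (N : ℤ) ≤ ∑ j ∈ Finset.Icc (-(m : ℤ)) (k : ℤ),
        |(p (a j) * Polynomial.X ^ (j + m).toNat).coeff m| := by
          rw [hcm]; exact Finset.sum_le_sum fun j _ => le_abs_self _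
      _ ≤ ∑ j ∈ Finset.Icc (-(m : ℤ)) (k : ℤ),
          (if j ∈ Finset.Icc (-(D : ℤ)) 0 then (C : ℤ) else 0) := by
          apply Finset.sum_le_sum
          intro j hj
          rw [Finset.mem_Icc] at hj
          rw [Polynomial.coeff_mul_X_pow']
          by_cases hmem : j ∈ Finset.Icc (-(D : ℤ)) 0
          · rw [if_pos hmem]
            by_cases hle : (j + m).toNat ≤ m
            · rw [if_pos hle]
              rw [Int.abs_eq_natAbs]
              exact_mod_cast hcoeff _ (haA j) _
            · rw [if_neg hle]; simp
          · rw [if_neg hmem]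
            rw [Finset.mem_Icc] at hmem
            push_neg at hmem
            by_cases hjpos : 0 < j
            · have : ¬ (j + m).toNat ≤ m := by omega
              rw [if_neg this]; simp
            · have hjD : j < -(D : ℤ) := by omega
              have hle : (j + m).toNat ≤ m := by omega
              rw [if_pos hle]
              have : (p (a j)).natDegree < m - (j + m).toNat := by
                have := hdeg _ (haA j)
                omega
              rw [Polynomial.coeff_eq_zero_of_natDegree_lt this]
              simp
      _ = ∑ j ∈ Finset.Icc (-(m : ℤ)) (k : ℤ) ∩ Finset.Icc (-(D : ℤ)) 0, (C : ℤ) :=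
          (Finset.sum_ite_mem _ _ _)
      _ ≤ ∑ j ∈ Finset.Icc (-(D : ℤ)) 0, (C : ℤ) := by
          apply Finset.sum_le_sum_of_subset_of_nonneg (Finset.inter_subset_right)
          intros; positivity
      _ = ((D : ℤ) + 1) * C := by
          rw [Finset.sum_const, Int.card_Icc]
          simp [nsmul_eq_mul]
          ring_nf
          omega
  rw [hN] at hbound
  push_cast at hbound
  linarith
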